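/- Let (g_{kl}) be a Riesz basis for its closed span in a Hilbert space with analysis operator H and bounds A, B. Define γ = H*(HH*)⁻¹σ and γ⁽ⁿ⁾ = H_n*(H_n H_n*)⁻¹ P_n σ, where H_n = P_n H are the finite sections and σ ∈ range(H). Then ‖γ − γ⁽ⁿ⁾‖ → 0 as n → ∞. -/

import Mathlib

open Filter ContinuousLinearMap
set_option maxHeartbeats 1000000

local notation "⟪" x ", " y "⟫" => @inner ℂ _ _ x y

private noncomputable def boxFS (n : ℕ) : Finset (ℤ × ℤ) :=
  Finset.Icc (-(n : ℤ)) n ×ˢ Finset.Icc (-(n : ℤ)) n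

private lemma mem_boxFS {n : ℕ} {p : ℤ × ℤ} :
    p ∈ boxFS n ↔ p.1.natAbs ≤ n ∧ p.2.natAbs ≤ n := by
  simp only [boxFS, Finset.mem_product, Finset.mem_Icc]
  omega

private lemma tendsto_boxFS : Tendsto boxFS atTop atTop := by
  apply tendsto_atTop_finset_of_monotone
  · intro m n hmn p hp
    rw [mem_boxFS] at *
    omega
  · intro p
    exact ⟨max p.1.natAbs p.2.natAbs,
      mem_boxFS.2 ⟨le_max_left _ _, le_max_right _ _⟩⟩

/-- Applicability of the finite section method for computing
γ = H*(HH*)⁻¹σ from a Riesz-basis analysis operator H: the finite-section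
approximations γ⁽ⁿ⁾ converge to γ in norm. -/
theorem finite_section_convergence
    {E : Type*} [NormedAddCommGroup E] [InnerProductSpace ℂ E] [CompleteSpace E]
    (H : E →L[ℂ] lp (fun _ : ℤ × ℤ => ℂ) 2) (A B : ℝ) (hA : 0 < A)
    (hRiesz : ∀ c : lp (fun _ : ℤ × ℤ => ℂ) 2,
      A * ‖c‖ ^ 2 ≤ ‖(ContinuousLinearMap.adjoint H) c‖ ^ 2 ∧
        ‖(ContinuousLinearMap.adjoint H) c‖ ^ 2 ≤ B * ‖c‖ ^ 2)
    (σ y : lp (fun _ : ℤ × ℤ => ℂ) 2)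
    -- y solves the infinite system (HH*) y = σ, so γ = H* y
    (hy : H ((ContinuousLinearMap.adjoint H) y) = σ)
    -- x n solves the n-th finite section of the system, so γ⁽ⁿ⁾ = H* (x n)
    (x : ℕ → lp (fun _ : ℤ × ℤ => ℂ) 2)
    (hxsupp : ∀ (n : ℕ) (p : ℤ × ℤ), ¬(p.1.natAbs ≤ n ∧ p.2.natAbs ≤ n) → x n p = 0)
    (hxeq : ∀ (n : ℕ) (p : ℤ × ℤ), p.1.natAbs ≤ n → p.2.natAbs ≤ n →
      (H ((ContinuousLinearMap.adjoint H) (x n))) p = σ p) :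
    Tendsto (fun n =>
        ‖(ContinuousLinearMap.adjoint H) y - (ContinuousLinearMap.adjoint H) (x n)‖)
      atTop (nhds 0) := by
  set Hs := ContinuousLinearMap.adjoint H with hHs
  -- the "residual" of the n-th finite section
  set u : ℕ → lp (fun _ : ℤ × ℤ => ℂ) 2 := fun n => σ - H (Hs (x n)) with hu
  -- coordinates of the residual vanish on the box
  have hu_box : ∀ n, ∀ p : ℤ × ℤ, p ∈ boxFS n → u n p = 0 := by
    intro n p hp
    rw [mem_boxFS] at hp
    have := hxeq n p hp.1 hp.2
    simp only [hu]
    rw [lp.coeFn_sub]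
    simp [this]
  -- the residual is orthogonal to x n
  have hux : ∀ n, ⟪u n, x n⟫ = 0 := by
    intro n
    rw [lp.inner_eq_tsum]
    refine (tsum_congr ?_).trans tsum_zero
    intro p
    by_cases hp : p.1.natAbs ≤ n ∧ p.2.natAbs ≤ n
    · rw [hu_box n p (mem_boxFS.2 hp)]; simp
    · rw [hxsupp n p hp]; simp
  -- norm-squared via the inner product
  have hnormsq : ∀ c : lp (fun _ : ℤ × ℤ => ℂ) 2,
      ‖Hs c‖ ^ 2 = (⟪H (Hs c), c⟫).re := by
    intro c
    rw [InnerProductSpace.norm_sq_eq_re_inner (𝕜 := ℂ)]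
    rw [ContinuousLinearMap.adjoint_inner_left]
    exact inner_re_symm _ _
  -- uniform bound on the finite section solutions
  have hxb : ∀ n, ‖x n‖ ≤ ‖σ‖ / A := by
    intro n
    have h1 : A * ‖x n‖ ^ 2 ≤ ‖Hs (x n)‖ ^ 2 := (hRiesz (x n)).1
    have h2 : ‖Hs (x n)‖ ^ 2 = (⟪σ - u n, x n⟫).re := by
      rw [hnormsq]
      congr 2
      simp [hu]
    have h3 : (⟪σ - u n, x n⟫).re = (⟪σ, x n⟫).re := by
      rw [inner_sub_left, hux n]; simp
    have h4 : (⟪σ, x n⟫).re ≤ ‖σ‖ * ‖x n‖ := by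
      calc (⟪σ, x n⟫).re ≤ ‖⟪σ, x n⟫‖ := Complex.re_le_norm _
        _ ≤ ‖σ‖ * ‖x n‖ := norm_inner_le_norm _ _
    have h5 : A * ‖x n‖ ^ 2 ≤ ‖σ‖ * ‖x n‖ := by
      rw [h2, h3] at h1; linarith
    rcases eq_or_lt_of_le (norm_nonneg (x n)) with h0 | h0
    · rw [← h0]; positivity
    · rw [le_div_iff₀ hA]
      nlinarith
  -- uniform bound on the residuals
  set C : ℝ := ‖σ‖ + ‖H‖ * ‖Hs‖ * (‖σ‖ / A) with hC
  have hub : ∀ n, ‖u n‖ ≤ C := by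
    intro n
    have : ‖H (Hs (x n))‖ ≤ ‖H‖ * ‖Hs‖ * ‖x n‖ := by
      calc ‖H (Hs (x n))‖ ≤ ‖H‖ * ‖Hs (x n)‖ := H.le_opNorm _
        _ ≤ ‖H‖ * (‖Hs‖ * ‖x n‖) :=
          mul_le_mul_of_nonneg_left (Hs.le_opNorm _) (norm_nonneg _)
        _ = ‖H‖ * ‖Hs‖ * ‖x n‖ := by ring
    have h6 : ‖H‖ * ‖Hs‖ * ‖x n‖ ≤ ‖H‖ * ‖Hs‖ * (‖σ‖ / A) := by
      apply mul_le_mul_of_nonneg_left (hxb n); positivity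
    calc ‖u n‖ ≤ ‖σ‖ + ‖H (Hs (x n))‖ := norm_sub_le _ _
      _ ≤ C := by rw [hC]; linarith
  -- truncations of y converge to y
  set Y : ℕ → lp (fun _ : ℤ × ℤ => ℂ) 2 :=
    fun n => ∑ p ∈ boxFS n, lp.single 2 p (y p) with hY
  have hYtend : Tendsto (fun n => ‖y - Y n‖) atTop (nhds 0) := by
    have hsum : HasSum (fun p : ℤ × ℤ => lp.single 2 p (y p)) y :=
      lp.hasSum_single (by norm_num) y
    have := (hsum.comp tendsto_boxFS : Tendsto (fun n => Y n) atTop (nhds y))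
    have h7 := tendsto_iff_norm_sub_tendsto_zero.mp this
    exact h7.congr fun n => norm_sub_rev _ _
  -- the residual is orthogonal to the truncations
  have huY : ∀ n, ⟪u n, Y n⟫ = 0 := by
    intro n
    rw [hY, inner_sum]
    apply Finset.sum_eq_zero
    intro p hp
    rw [lp.inner_single_right, hu_box n p hp]
    simp
  -- main estimate
  have hmain : ∀ n, ‖Hs y - Hs (x n)‖ ^ 2 ≤ C * ‖y - Y n‖ := by
    intro n
    have e1 : Hs y - Hs (x n) = Hs (y - x n) := (map_sub Hs y (x n)).symm
    have e2 : H (Hs (y - x n)) = u n := by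
      rw [map_sub Hs, map_sub H, hy, hu]
    calc ‖Hs y - Hs (x n)‖ ^ 2 = (⟪H (Hs (y - x n)), y - x n⟫).re := by
          rw [e1, hnormsq]
      _ = (⟪u n, y⟫).re := by rw [e2, inner_sub_right, hux n]; simp
      _ = (⟪u n, y - Y n⟫).re := by rw [inner_sub_right, huY n]; simp
      _ ≤ ‖⟪u n, y - Y n⟫‖ := Complex.re_le_norm _
      _ ≤ ‖u n‖ * ‖y - Y n‖ := norm_inner_le_norm _ _
      _ ≤ C * ‖y - Y n‖ := mul_le_mul_of_nonneg_right (hub n) (norm_nonneg _)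
  -- conclude by squeezing
  have hsq : Tendsto (fun n => ‖Hs y - Hs (x n)‖ ^ 2) atTop (nhds 0) := by
    apply squeeze_zero (fun n => by positivity) hmain
    simpa using hYtend.const_mul C
  have := hsq.sqrt
  rw [Real.sqrt_zero] at this
  refine this.congr fun n => ?_
  rw [Real.sqrt_sq (norm_nonneg _)]
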